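/- Let μ be the alternating bilinear map on ℝ⁵ determined (together with antisymmetry) by the nonzero brackets on the standard basis e1,…,e5: [e1,e3] = 2e1, [e3,e5] = 2e5, [e1,e5] = e3, [e3,e2] = e2, [e4,e3] = e4, [e5,e4] = e2, [e2,e1] = e4, all other brackets of basis vectors zero. Then μ satisfies the Jacobi identity (it defines a Lie algebra isomorphic to the non-trivial semidirect sum sl(2,ℝ) ⋉ ℝ²), and μ is in the null cone of the O(B)-action, where B is the bilinear form on ℝ⁵ with B(e1,e2) = B(e2,e1) = B(e3,e4) = B(e4,e3) = 1, B(e5,e5) = 1 and all other pairings of basis vectors zero (a form of signature (2,3)). -/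

import Mathlib

/-- The isometry group `O(B)` of a bilinear form `B`. -/
def IsometryGrp {V : Type*} [AddCommGroup V] [Module ℝ V]
    (B : LinearMap.BilinForm ℝ V) : Set (V ≃ₗ[ℝ] V) :=
  {A | ∀ x y, B (A x) (A y) = B x y}

/-- `μ` is in the null cone of the `O(B)`-action: `0` lies in the closure of the orbit
`O(B)·μ`, `(A·μ)(x,y) = A⁻¹(μ(Ax,Ay))`, in the topology of pointwise convergence. -/
def InNullCone {V : Type*} [AddCommGroup V] [Module ℝ V] [TopologicalSpace V]
    (B : LinearMap.BilinForm ℝ V) (μ : V → V → V) : Prop :=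
  (0 : V → V → V) ∈
    closure {f : V → V → V | ∃ A ∈ IsometryGrp B, f = fun x y => A.symm (μ (A x) (A y))}

/-- The bracket on `ℝ⁵` (standard basis `e1 = e 0, …, e5 = e 4`) given by the alternating
bilinear extension of `[e1,e3] = 2e1`, `[e3,e5] = 2e5`, `[e1,e5] = e3`, `[e3,e2] = e2`,
`[e4,e3] = e4`, `[e5,e4] = e2`, `[e2,e1] = e4`, all other brackets of basis vectors zero.
It defines a Lie algebra isomorphic to `sl(2,ℝ) ⋉ ℝ²`. -/
def sl2r2bracket : (Fin 5 → ℝ) → (Fin 5 → ℝ) → (Fin 5 → ℝ) :=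
  fun x y =>
    ![2 * (x 0 * y 2 - x 2 * y 0),
      (x 2 * y 1 - x 1 * y 2) + (x 4 * y 3 - x 3 * y 4),
      x 0 * y 4 - x 4 * y 0,
      (x 3 * y 2 - x 2 * y 3) + (x 1 * y 0 - x 0 * y 1),
      2 * (x 2 * y 4 - x 4 * y 2)]

/-- The bilinear form on `ℝ⁵` with `B(e1,e2) = B(e2,e1) = B(e3,e4) = B(e4,e3) = 1`,
`B(e5,e5) = 1` and all other pairings of basis vectors zero (signature `(2,3)`). -/
noncomputable def neutralForm5 : LinearMap.BilinForm ℝ (Fin 5 → ℝ) :=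
  Matrix.toLinearMap₂' ℝ
    (!![0,1,0,0,0; 1,0,0,0,0; 0,0,0,1,0; 0,0,1,0,0; 0,0,0,0,1] : Matrix (Fin 5) (Fin 5) ℝ)

noncomputable def diagEquiv (c : Fin 5 → ℝ) (hc : ∀ i, c i ≠ 0) :
    (Fin 5 → ℝ) ≃ₗ[ℝ] (Fin 5 → ℝ) :=
  LinearEquiv.piCongrRight fun i => LinearEquiv.smulOfNeZero ℝ ℝ (c i) (hc i)

lemma diagEquiv_apply (c : Fin 5 → ℝ) (hc : ∀ i, c i ≠ 0) (x : Fin 5 → ℝ) (i : Fin 5) :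
    diagEquiv c hc x i = c i * x i := by
  simp [diagEquiv]

lemma diagEquiv_symm_apply (c : Fin 5 → ℝ) (hc : ∀ i, c i ≠ 0) (x : Fin 5 → ℝ) (i : Fin 5) :
    (diagEquiv c hc).symm x i = (c i)⁻¹ * x i := by
  simp [diagEquiv, LinearEquiv.smulOfNeZero, LinearEquiv.smulOfUnit,
    DistribMulAction.toLinearEquiv, Units.smul_def]

lemma neutralForm5_apply (x y : Fin 5 → ℝ) :
    neutralForm5 x y = x 0 * y 1 + x 1 * y 0 + x 2 * y 3 + x 3 * y 2 + x 4 * y 4 := by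
  simp [neutralForm5, Matrix.toLinearMap₂'_apply, Fin.sum_univ_five,
    Matrix.vecHead, Matrix.vecTail]

lemma smul_bracket_mem (t : ℝ) (ht : t ≠ 0) :
    (fun x y => t • sl2r2bracket x y) ∈
      {f : (Fin 5 → ℝ) → (Fin 5 → ℝ) → (Fin 5 → ℝ) |
        ∃ A ∈ IsometryGrp neutralForm5, f = fun x y => A.symm (sl2r2bracket (A x) (A y))} := by
  have hc : ∀ i, (![t^2, (t^2)⁻¹, t, t⁻¹, 1] : Fin 5 → ℝ) i ≠ 0 := by
    intro i
    fin_cases i <;> simp [ht, pow_ne_zero]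
  refine ⟨diagEquiv ![t^2, (t^2)⁻¹, t, t⁻¹, 1] hc, ?_, ?_⟩
  · intro x y
    simp only [neutralForm5_apply, diagEquiv_apply]
    clear hc
    simp [Matrix.vecHead, Matrix.vecTail]
    field_simp
  · funext x y
    funext i
    fin_cases i <;>
      simp [diagEquiv_symm_apply, diagEquiv_apply, sl2r2bracket,
        Matrix.vecHead, Matrix.vecTail] <;>
      (try clear hc) <;>
      (try field_simp) <;>
      first
        | ring1
        | exact Or.inl (by ring)
        | exact Or.inl trivial

/-- `sl2r2bracket` satisfies the Jacobi identity and is in the null cone of the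
`O(B)`-action for the above form `B` of signature `(2,3)`. -/
theorem sl2r2_jacobi_and_in_null_cone :
    (∀ x y z : Fin 5 → ℝ,
      sl2r2bracket x (sl2r2bracket y z) + sl2r2bracket y (sl2r2bracket z x) +
        sl2r2bracket z (sl2r2bracket x y) = 0) ∧
    InNullCone neutralForm5 sl2r2bracket := by
  constructor
  · intro x y z
    funext i
    fin_cases i <;>
      simp [sl2r2bracket, Fin.isValue] <;> ring
  · have key : Filter.Tendsto
        (fun n : ℕ => fun x y => ((n:ℝ)+1)⁻¹ • sl2r2bracket x y) Filter.atTop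
        (nhds (0 : (Fin 5 → ℝ) → (Fin 5 → ℝ) → (Fin 5 → ℝ))) := by
      rw [tendsto_pi_nhds]
      intro x
      rw [tendsto_pi_nhds]
      intro y
      rw [tendsto_pi_nhds]
      intro i
      simp only [Pi.smul_apply, smul_eq_mul, Pi.zero_apply]
      have := tendsto_one_div_add_atTop_nhds_zero_nat (𝕜 := ℝ)
      have h := this.mul_const (sl2r2bracket x y i)
      simpa [one_div] using h
    exact mem_closure_of_tendsto key
      (Filter.Eventually.of_forall fun n =>
        smul_bracket_mem ((n:ℝ)+1)⁻¹ (by positivity))
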